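/- Let 0 < p ≤ 1 and suppose S_1 ∈ ℕ and k > 1 with kS_1 ∈ ℕ satisfy δ_{(k+1)S_1} < (k−1)/(k+1), where δ denotes the restricted isometry constants of a matrix A. Then with S_p = ⌊(k+1)S_1 / (k^{p/(2−p)} + 1)⌋, there exists ℓ ≥ k^{p/(2−p)} with (ℓ+1)S_p = (k+1)S_1 and δ_{(ℓ+1)S_p} < (ℓ^{(2−p)/p} − 1)/(ℓ^{(2−p)/p} + 1). -/

import Mathlib

theorem rel_Sp_S1 (p : ℝ) (hp0 : 0 < p) (hp1 : p ≤ 1)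
    (δ : ℕ → ℝ) (hmono : Monotone δ)
    (S₁ : ℕ) (hS₁ : 0 < S₁) (k : ℝ) (hk : 1 < k)
    (kS₁ : ℕ) (hkS₁ : (kS₁ : ℝ) = k * S₁)
    (hcond : δ (kS₁ + S₁) < (k - 1) / (k + 1)) :
    ∃ ℓ : ℝ, k ^ (p / (2 - p)) ≤ ℓ ∧
      (ℓ + 1) * (↑(⌊(k + 1) * S₁ / (k ^ (p / (2 - p)) + 1)⌋₊) : ℝ) = (k + 1) * S₁ ∧
      δ (kS₁ + S₁) < (ℓ ^ ((2 - p) / p) - 1) / (ℓ ^ ((2 - p) / p) + 1) := by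
  have h2p : 0 < 2 - p := by linarith
  have hk0 : (0:ℝ) < k := by linarith
  set q : ℝ := p / (2 - p) with hq
  have hq0 : 0 < q := div_pos hp0 h2p
  set a : ℝ := k ^ q with ha
  have ha1 : 1 < a := Real.one_lt_rpow_iff_of_pos hk0 |>.mpr (Or.inl ⟨hk, hq0⟩)
  have hq1 : q ≤ 1 := by
    rw [hq, div_le_one h2p]; linarith
  have hak : a ≤ k := by
    calc a ≤ k ^ (1:ℝ) := Real.rpow_le_rpow_of_exponent_le hk.le hq1
    _ = k := Real.rpow_one k
  have hS₁1 : (1:ℝ) ≤ (S₁:ℝ) := by exact_mod_cast hS₁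
  have hX : (0:ℝ) < (k + 1) * S₁ := by nlinarith
  set S : ℕ := ⌊(k + 1) * S₁ / (a + 1)⌋₊ with hS
  have hSpos : 1 ≤ S := by
    apply Nat.le_floor
    rw [le_div_iff₀ (by linarith)]
    push_cast
    nlinarith [mul_le_mul_of_nonneg_left hS₁1 (by linarith : (0:ℝ) ≤ k+1)]
  have hS0 : (0:ℝ) < (S:ℝ) := by exact_mod_cast hSpos
  have hfloor : (S:ℝ) ≤ (k + 1) * S₁ / (a + 1) :=
    Nat.floor_le (by positivity)
  set ℓ : ℝ := (k + 1) * S₁ / S - 1 with hℓ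
  have hℓa : a ≤ ℓ := by
    rw [hℓ, le_sub_iff_add_le, le_div_iff₀ hS0]
    rw [le_div_iff₀ (by linarith)] at hfloor
    linarith [hfloor]
  refine ⟨ℓ, hℓa, ?_, ?_⟩
  · rw [hℓ]
    field_simp
    ring
  · have hℓ0 : 0 < ℓ := by linarith
    have hx : k ≤ ℓ ^ ((2 - p) / p) := by
      have h1 : a ^ ((2 - p) / p) ≤ ℓ ^ ((2 - p) / p) :=
        Real.rpow_le_rpow (by positivity) hℓa (by positivity)
      have h2 : a ^ ((2 - p) / p) = k := by
        rw [ha, ← Real.rpow_mul hk0.le, hq]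
        rw [div_mul_div_comm, mul_comm p (2 - p), div_self (by positivity), Real.rpow_one]
      linarith
    refine lt_of_lt_of_le hcond ?_
    rw [div_le_div_iff₀ (by linarith) (by nlinarith)]
    nlinarith
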